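/- Let α, β, γ be complex numbers satisfying 2α = βγ and 2β = α(αβ - γ). Then either β²γ² - 2γ² - 8 = 0, or α = β = 0. -/
import Mathlib

theorem trace_relations (α β γ : ℂ) (h1 : 2 * α = β * γ) (h2 : 2 * β = α * (α * β - γ)) :
    β ^ 2 * γ ^ 2 - 2 * γ ^ 2 - 8 = 0 ∨ (α = 0 ∧ β = 0) := by
  by_cases hβ : β = 0
  · right
    refine ⟨?_, hβ⟩
    have : 2 * α = 0 := by rw [h1, hβ]; ring
    simpa using this
  · left
    have h : β * (β ^ 2 * γ ^ 2 - 2 * γ ^ 2 - 8) = 0 := by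
      linear_combination (2*γ - β^2*γ - 2*α*β) * h1 - 4 * h2
    rcases mul_eq_zero.mp h with h' | h'
    · exact absurd h' hβ
    · exact h'
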